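/- Let χ be a Dirichlet character (a complex-valued character modulo some positive integer, extended by zero), let v be a positive integer, and let s be any complex number. Then T_s^{χ}(v) = v^{2s−1} · T_{1−s}^{χ}(v). -/

import Mathlib

open scoped Real BigOperators

/-- The divisor power sum `σ_w(u) = Σ_{d ∣ u} d^w` with complex exponent `w`. -/
noncomputable def sigmaC (w : ℂ) (u : ℕ) : ℂ := ∑ d ∈ u.divisors, ((d : ℂ)) ^ w

/-- `T_s^χ(v) = Σ_{a ∣ v} μ(a) χ(a) a^(s-1) σ_{2s-1}(v/a)`. -/
noncomputable def TT (χ : ℕ → ℂ) (s : ℂ) (v : ℕ) : ℂ :=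
  ∑ a ∈ v.divisors,
    ((ArithmeticFunction.moebius a : ℤ) : ℂ) * χ a * ((a : ℂ)) ^ (s - 1) *
      sigmaC (2 * s - 1) (v / a)

private lemma key_cpow (s : ℂ) (a d e : ℕ) (ha : 0 < a) (hd : 0 < d) (he : 0 < e) :
    ((a * d * e : ℕ) : ℂ) ^ (2 * s - 1) * ((a : ℂ)) ^ (1 - s - 1) *
      ((e : ℂ)) ^ (2 * (1 - s) - 1)
      = ((a : ℂ)) ^ (s - 1) * ((d : ℂ)) ^ (2 * s - 1) := by
  have ha' : (a : ℂ) ≠ 0 := Nat.cast_ne_zero.mpr ha.ne'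
  have he' : (e : ℂ) ≠ 0 := Nat.cast_ne_zero.mpr he.ne'
  have natmul : ∀ (x y : ℕ) (r : ℂ), ((x * y : ℕ) : ℂ) ^ r = ((x : ℂ)) ^ r * ((y : ℂ)) ^ r := by
    intro x y r
    have := Complex.mul_cpow_ofReal_nonneg x.cast_nonneg y.cast_nonneg r
    simpa using this
  have hsplit : ((a * d * e : ℕ) : ℂ) ^ (2 * s - 1)
      = ((a : ℂ)) ^ (2 * s - 1) * ((d : ℂ)) ^ (2 * s - 1) * ((e : ℂ)) ^ (2 * s - 1) := by
    rw [natmul (a * d) e, natmul a d]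
  have h1 : ((a : ℂ)) ^ (2 * s - 1) * ((a : ℂ)) ^ (1 - s - 1) = ((a : ℂ)) ^ (s - 1) := by
    rw [← Complex.cpow_add _ _ ha']
    congr 1; ring
  have h2 : ((e : ℂ)) ^ (2 * s - 1) * ((e : ℂ)) ^ (2 * (1 - s) - 1) = 1 := by
    rw [← Complex.cpow_add _ _ he', show 2 * s - 1 + (2 * (1 - s) - 1) = 0 by ring,
      Complex.cpow_zero]
  calc ((a * d * e : ℕ) : ℂ) ^ (2 * s - 1) * ((a : ℂ)) ^ (1 - s - 1) *
        ((e : ℂ)) ^ (2 * (1 - s) - 1)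
      = (((a : ℂ)) ^ (2 * s - 1) * ((a : ℂ)) ^ (1 - s - 1)) *
        (((e : ℂ)) ^ (2 * s - 1) * ((e : ℂ)) ^ (2 * (1 - s) - 1)) *
        ((d : ℂ)) ^ (2 * s - 1) := by rw [hsplit]; ring
    _ = ((a : ℂ)) ^ (s - 1) * ((d : ℂ)) ^ (2 * s - 1) := by rw [h1, h2]; ring

/-- the functional equation `T_s^χ(v) = v^(2s-1) T_{1-s}^χ(v)` for any
Dirichlet character `χ` (mod `N`, extended by zero), positive integer `v`, and `s ∈ ℂ`. -/
theorem TT_functional_equation (N : ℕ) (hN : 0 < N) (χ : DirichletCharacter ℂ N)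
    (v : ℕ) (hv : 0 < v) (s : ℂ) :
    TT (fun a => χ ((a : ℕ) : ZMod N)) s v
      = ((v : ℂ)) ^ (2 * s - 1) * TT (fun a => χ ((a : ℕ) : ZMod N)) (1 - s) v := by
  unfold TT
  rw [Finset.mul_sum]
  refine Finset.sum_congr rfl fun a ha => ?_
  obtain ⟨haV, hv0⟩ := Nat.mem_divisors.mp ha
  have ha0 : 0 < a := Nat.pos_of_mem_divisors ha
  set u : ℕ := v / a with hu
  have hau : a * u = v := Nat.mul_div_cancel' haV
  have hu0 : 0 < u := Nat.div_pos (Nat.le_of_dvd hv haV) ha0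
  unfold sigmaC
  rw [show (∑ d ∈ u.divisors, ((d : ℂ)) ^ (2 * (1 - s) - 1))
      = ∑ d ∈ u.divisors, (((u / d : ℕ) : ℂ)) ^ (2 * (1 - s) - 1) from
    (Nat.sum_div_divisors u fun d => ((d : ℂ)) ^ (2 * (1 - s) - 1)).symm]
  rw [Finset.mul_sum, Finset.mul_sum, Finset.mul_sum]
  refine Finset.sum_congr rfl fun d hd => ?_
  have hd0 : 0 < d := Nat.pos_of_mem_divisors hd
  have hdu : d ∣ u := (Nat.mem_divisors.mp hd).1
  set e : ℕ := u / d with he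
  have hde : d * e = u := Nat.mul_div_cancel' hdu
  have he0 : 0 < e := Nat.div_pos (Nat.le_of_dvd hu0 hdu) hd0
  have hvade : v = a * d * e := by rw [mul_assoc, hde, hau]
  have key := key_cpow s a d e ha0 hd0 he0
  rw [← hvade] at key
  set C : ℂ := ((ArithmeticFunction.moebius a : ℤ) : ℂ) * χ ((a : ℕ) : ZMod N)
  calc C * ((a : ℂ)) ^ (s - 1) * ((d : ℂ)) ^ (2 * s - 1)
      = C * (((v : ℂ)) ^ (2 * s - 1) * ((a : ℂ)) ^ (1 - s - 1) *
          ((e : ℂ)) ^ (2 * (1 - s) - 1)) := by rw [key]; ring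
    _ = ((v : ℂ)) ^ (2 * s - 1) * (C * ((a : ℂ)) ^ (1 - s - 1) *
          ((e : ℂ)) ^ (2 * (1 - s) - 1)) := by ring
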